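/- Expected collective waiting time for elementary links under the t* = ∞ memory-cutoff policy: let p ∈ (0,1], M ≥ 1, and t_req ∈ ℕ. Let T₁, …, T_M be independent, identically distributed random variables with the geometric distribution Pr[T_e = t] = p(1−p)^{t−1} for t ∈ {1,2,3,…} (the time of first successful generation of link e), and define the waiting time W := max( max_{1≤e≤M} T_e − t_req, 1 ). Then E[W] = ∑_{k=1}^{M} C(M,k)·(−1)^{k+1}·(1 + (1−p_k)^{t_req+1}/p_k), where p_k := 1 − (1−p)^k and C(M,k) is the binomial coefficient. -/

import Mathlib

open MeasureTheory BigOperators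

private lemma range_succ_eq_insert' (M : ℕ) :
    Finset.range (M+1) = insert 0 (Finset.Icc 1 M) := by
  ext k; simp [Nat.lt_succ_iff, Finset.mem_Icc]; omega

private lemma binom_id (M : ℕ) (x : ℝ) :
    1 - (1 - x)^M = ∑ k ∈ Finset.Icc 1 M, (M.choose k : ℝ) * (-1)^(k+1) * x^k := by
  have h : (1 - x)^M = ∑ k ∈ Finset.range (M+1), (-x)^k * 1^(M-k) * (M.choose k) := by
    rw [sub_eq_add_neg, add_comm]
    exact add_pow _ _ _
  rw [h, range_succ_eq_insert' M, Finset.sum_insert (by simp)]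
  rw [show ((-x)^0 * 1^(M-0) * (M.choose 0 : ℝ)) = 1 by simp]
  have : ∀ k ∈ Finset.Icc 1 M, (M.choose k : ℝ) * (-1)^(k+1) * x^k
      = -((-x)^k * 1^(M-k) * (M.choose k : ℝ)) := by
    intro k hk
    rw [neg_pow]
    ring
  rw [Finset.sum_congr rfl this, Finset.sum_neg_distrib]
  ring

private lemma geom_pmf_sum (p : ℝ) (s : ℕ) :
    ∑ t ∈ Finset.range s, p * (1-p)^t = 1 - (1-p)^s := by
  induction s with
  | zero => simp
  | succ n ih => rw [Finset.sum_range_succ, ih]; ring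

private lemma nat_cast_eq_tsum (m : ℕ) :
    (m : ENNReal) = ∑' n : ℕ, (if n < m then 1 else 0) := by
  rw [tsum_eq_sum (s := Finset.range m) (fun n hn => by simp [Finset.mem_range] at hn; simp [hn])]
  rw [Finset.sum_ite_of_true (by intro n hn; simpa [Finset.mem_range] using hn)]
  simp


/-- **Expected collective waiting time for `M` elementary links under the `t* = ∞`
memory-cutoff policy.** The `T e` are i.i.d. geometric random variables on `{1, 2, …}`
with parameter `p` (the time of first successful generation of link `e`), and
`W = max(max_e T_e - t_req, 1)` is the waiting time after a request at time `t_req`. -/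
theorem expected_collective_waiting_time_infinite_cutoff
    {Ω : Type*} [MeasurableSpace Ω] (μ : Measure Ω) [IsProbabilityMeasure μ]
    (p : ℝ) (hp0 : 0 < p) (hp1 : p ≤ 1) (M : ℕ) (hM : 1 ≤ M) (treq : ℕ)
    (T : Fin M → Ω → ℕ) (hmeas : ∀ e, Measurable (T e))
    (hgeom : ∀ e, ∀ t : ℕ,
      μ {ω | T e ω = t} = if t = 0 then 0 else ENNReal.ofReal (p * (1 - p) ^ (t - 1)))
    (hindep : ∀ t : Fin M → ℕ,
      μ {ω | ∀ e, T e ω = t e} = ∏ e : Fin M, μ {ω | T e ω = t e}) :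
    ∫ ω, ((max ((Finset.univ.sup fun e => T e ω) - treq) 1 : ℕ) : ℝ) ∂μ
      = ∑ k ∈ Finset.Icc 1 M, (M.choose k : ℝ) * (-1 : ℝ) ^ (k + 1) *
          (1 + (1 - (1 - (1 - p) ^ k)) ^ (treq + 1) / (1 - (1 - p) ^ k)) := by
  classical
  have hq0 : (0:ℝ) ≤ 1 - p := by linarith
  have hq1 : 1 - p < 1 := by linarith
  have hqpow1 : ∀ s : ℕ, (1-p)^s ≤ 1 := fun s => pow_le_one₀ hq0 hq1.le
  have hqpownn : ∀ s : ℕ, (0:ℝ) ≤ (1-p)^s := fun s => pow_nonneg hq0 s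
  have h1q_nonneg : ∀ s : ℕ, (0:ℝ) ≤ 1 - (1-p)^s := fun s => by linarith [hqpow1 s]
  have h1q_le_one : ∀ s : ℕ, 1 - (1-p)^s ≤ 1 := fun s => by linarith [hqpownn s]
  set V : Ω → ℕ := fun ω => Finset.univ.sup fun e => T e ω with hV
  -- measurability of V
  have hVmeas : Measurable V := by
    have : ∀ (s : Finset (Fin M)), Measurable (fun ω => s.sup fun e => T e ω) := by
      intro s
      induction s using Finset.induction with
      | empty => simp only [Finset.sup_empty]; exact measurable_const
      | insert _ _ h ih =>
          simp only [Finset.sup_insert]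
          exact Measurable.sup (hmeas _) ih
    exact this _
  have hmsetV : ∀ s : Set ℕ, MeasurableSet (V ⁻¹' s) := fun s => hVmeas trivial
  -- pmf sums
  have hsum_e : ∀ (e : Fin M) (s : ℕ),
      μ {ω | T e ω ≤ s} = ∑ t ∈ Finset.range (s+1), μ {ω | T e ω = t} := by
    intro e s
    have hset : {ω | T e ω ≤ s} = ⋃ t ∈ Finset.range (s+1), {ω | T e ω = t} := by
      ext ω; simp [Nat.lt_succ_iff]
    rw [hset, measure_biUnion_finset]
    · intro a _ b _ hab
      refine Set.disjoint_left.2 fun ω h1 h2 => hab ?_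
      simp only [Set.mem_setOf_eq] at h1 h2
      rw [← h1, h2]
    · exact fun t _ => hmeas e (measurableSet_singleton t)
  have hle : ∀ (e : Fin M) (s : ℕ),
      μ {ω | T e ω ≤ s} = ENNReal.ofReal (1 - (1-p)^s) := by
    intro e s
    rw [hsum_e e s, Finset.sum_range_succ']
    simp only [hgeom, Nat.succ_ne_zero, if_false, Nat.add_sub_cancel, if_true]
    rw [← ENNReal.ofReal_sum_of_nonneg
      (fun t _ => mul_nonneg hp0.le (hqpownn t))]
    rw [geom_pmf_sum]
    simp
  have hprodset : ∀ s : ℕ,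
      μ {ω | ∀ e, T e ω ≤ s} = ∏ e : Fin M, μ {ω | T e ω ≤ s} := by
    intro s
    have hset : {ω | ∀ e, T e ω ≤ s}
        = ⋃ t ∈ Fintype.piFinset (fun _ : Fin M => Finset.range (s+1)),
            {ω | ∀ e, T e ω = t e} := by
      ext ω
      simp only [Set.mem_setOf_eq, Set.mem_iUnion, Fintype.mem_piFinset, Finset.mem_range,
        Nat.lt_succ_iff]
      constructor
      · intro h; exact ⟨fun e => T e ω, fun e => h e, fun e => rfl⟩
      · rintro ⟨t, ht, h2⟩ e; rw [h2 e]; exact ht e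
    rw [hset, measure_biUnion_finset]
    · rw [Finset.sum_congr rfl (fun t _ => hindep t),
        ← Finset.prod_univ_sum (fun _ : Fin M => Finset.range (s+1))
          (fun e n => μ {ω | T e ω = n})]
      exact Finset.prod_congr rfl fun e _ => (hsum_e e s).symm
    · intro a _ b _ hab
      obtain ⟨e, he⟩ := Function.ne_iff.1 hab
      refine Set.disjoint_left.2 fun ω h1 h2 => he ?_
      simp only [Set.mem_setOf_eq] at h1 h2
      rw [← h1 e, h2 e]
    · intro t _
      have : {ω | ∀ e, T e ω = t e} = ⋂ e, (T e) ⁻¹' {t e} := by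
        ext ω; simp [Set.mem_iInter]
      rw [this]
      exact MeasurableSet.iInter fun e => hmeas e (measurableSet_singleton _)
  have hF : ∀ s : ℕ, μ {ω | V ω ≤ s} = ENNReal.ofReal ((1 - (1-p)^s)^M) := by
    intro s
    have hset : {ω | V ω ≤ s} = {ω | ∀ e, T e ω ≤ s} := by
      ext ω; simp [hV, Finset.sup_le_iff]
    rw [hset, hprodset s, Finset.prod_congr rfl fun e _ => hle e s, Finset.prod_const,
      Finset.card_univ, Fintype.card_fin, ← ENNReal.ofReal_pow (h1q_nonneg s)]
  -- the tail function
  set g : ℕ → ℝ := fun n => if n = 0 then 1 else 1 - (1 - (1-p)^(treq+n))^M with hg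
  have hg0 : ∀ n, 0 ≤ g n := by
    intro n
    by_cases hn : n = 0
    · simp [hg, hn]
    · simp only [hg, hn, if_false]
      have := pow_le_one₀ (h1q_nonneg (treq+n)) (h1q_le_one (treq+n)) (n := M)
      linarith
  have hWn : ∀ n : ℕ, μ {ω | n < max (V ω - treq) 1} = ENNReal.ofReal (g n) := by
    intro n
    rcases Nat.eq_zero_or_pos n with rfl | hn
    · have hset : {ω | 0 < max (V ω - treq) 1} = Set.univ := by
        ext ω
        simp only [Set.mem_setOf_eq, Set.mem_univ, iff_true]
        exact lt_of_lt_of_le Nat.zero_lt_one (le_max_right _ _)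
      simp [hset, hg]
    · have hset : {ω | n < max (V ω - treq) 1} = (V ⁻¹' {k | k ≤ treq + n})ᶜ := by
        ext ω
        simp only [Set.mem_setOf_eq, Set.mem_compl_iff, Set.mem_preimage, lt_max_iff, not_le]
        omega
      rw [hset, measure_compl (hmsetV _) (measure_ne_top μ _), measure_univ]
      have : V ⁻¹' {k | k ≤ treq + n} = {ω | V ω ≤ treq + n} := rfl
      rw [this, hF]
      rw [← ENNReal.ofReal_one, ← ENNReal.ofReal_sub _
        (pow_nonneg (h1q_nonneg (treq+n)) M)]
      congr 1
      simp [hg, hn.ne']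
  -- lintegral computation
  have hmset2 : ∀ n : ℕ, MeasurableSet {ω | n < max (V ω - treq) 1} := by
    intro n
    have : {ω | n < max (V ω - treq) 1} = V ⁻¹' {k | n < max (k - treq) 1} := rfl
    rw [this]; exact hmsetV _
  have hlin : ∫⁻ ω, ((max (V ω - treq) 1 : ℕ) : ENNReal) ∂μ
      = ∑' n : ℕ, ENNReal.ofReal (g n) := by
    have h1 : ∀ ω, ((max (V ω - treq) 1 : ℕ) : ENNReal)
        = ∑' n : ℕ, (if n < max (V ω - treq) 1 then 1 else 0) :=
      fun ω => nat_cast_eq_tsum _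
    rw [lintegral_congr h1, lintegral_tsum (fun n =>
      ((measurable_const.ite (hmset2 n) measurable_const).aemeasurable))]
    refine tsum_congr fun n => ?_
    rw [← hWn n, ← lintegral_indicator_one (hmset2 n)]
    refine lintegral_congr fun ω => ?_
    rw [Set.indicator_apply]
    exact if_congr Iff.rfl rfl rfl
  -- summability and tsum of g
  set c : ℕ → ℝ := fun k => (M.choose k : ℝ) * (-1)^(k+1) with hc
  set h : ℕ → ℝ := fun n => ∑ k ∈ Finset.Icc 1 M, c k * ((1-p)^k)^(treq+n) with hh
  have hqk_lt : ∀ k ∈ Finset.Icc 1 M, (1-p)^k < 1 := by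
    intro k hk
    simp only [Finset.mem_Icc] at hk
    exact pow_lt_one₀ hq0 hq1 (by omega)
  have hgh : ∀ n, n ≠ 0 → g n = h n := by
    intro n hn
    simp only [hg, hh, hn, if_false]
    rw [binom_id M ((1-p)^(treq+n))]
    exact Finset.sum_congr rfl fun k _ => by rw [← pow_mul, ← pow_mul, Nat.mul_comm]
  have hsummable_k : ∀ k ∈ Finset.Icc 1 M, Summable (fun n : ℕ => c k * ((1-p)^k)^(treq+n)) := by
    intro k hk
    have : (fun n : ℕ => c k * ((1-p)^k)^(treq+n))
        = fun n : ℕ => (c k * ((1-p)^k)^treq) * ((1-p)^k)^n := by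
      funext n; rw [pow_add]; ring
    rw [this]
    exact (summable_geometric_of_lt_one (pow_nonneg hq0 _) (hqk_lt k hk)).mul_left _
  have hsummable_h : Summable h := summable_sum hsummable_k
  have hsummable_g : Summable g := by
    have hdiff : Summable (fun n => g n - h n) := by
      refine summable_of_ne_finset_zero (s := {0}) ?_
      intro n hn
      simp only [Finset.mem_singleton] at hn
      rw [hgh n hn, sub_self]
    exact (hsummable_h.add hdiff).congr (fun n => by ring)
  have hsum_c : ∑ k ∈ Finset.Icc 1 M, c k = 1 := by
    have := binom_id M 1
    simp only [sub_self, zero_pow (by omega : M ≠ 0), one_pow, mul_one] at this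
    rw [← this]; ring
  have htail : ∀ k ∈ Finset.Icc 1 M,
      ∑' n : ℕ, c k * ((1-p)^k)^(treq+(n+1))
        = c k * (((1-p)^k)^(treq+1) / (1 - (1-p)^k)) := by
    intro k hk
    have hrw : (fun n : ℕ => c k * ((1-p)^k)^(treq+(n+1)))
        = fun n : ℕ => (c k * ((1-p)^k)^(treq+1)) * ((1-p)^k)^n := by
      funext n
      rw [show treq+(n+1) = (treq+1)+n by omega, pow_add]
      ring
    rw [hrw, tsum_mul_left, tsum_geometric_of_lt_one (pow_nonneg hq0 _) (hqk_lt k hk)]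
    rw [div_eq_mul_inv]; ring
  have htsum_g : ∑' n, g n = ∑ k ∈ Finset.Icc 1 M, (M.choose k : ℝ) * (-1 : ℝ) ^ (k + 1) *
      (1 + (1 - (1 - (1 - p) ^ k)) ^ (treq + 1) / (1 - (1 - p) ^ k)) := by
    rw [Summable.tsum_eq_zero_add hsummable_g]
    have hg0' : g 0 = 1 := by simp [hg]
    have hrest : ∑' n : ℕ, g (n+1) = ∑' n : ℕ, h (n+1) :=
      tsum_congr fun n => hgh (n+1) (Nat.succ_ne_zero n)
    rw [hg0', hrest]
    have : ∑' n : ℕ, h (n+1)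
        = ∑ k ∈ Finset.Icc 1 M, c k * (((1-p)^k)^(treq+1) / (1 - (1-p)^k)) := by
      have hts := Summable.tsum_finsetSum (f := fun (k : ℕ) (n : ℕ) => c k * ((1-p)^k)^(treq+(n+1)))
        (s := Finset.Icc 1 M) (fun k hk => by
          show Summable (fun n : ℕ => c k * ((1-p)^k)^(treq+(n+1)))
          have hrw : (fun n : ℕ => c k * ((1-p)^k)^(treq+(n+1)))
              = fun n : ℕ => (c k * ((1-p)^k)^(treq+1)) * ((1-p)^k)^n := by
            funext n
            rw [show treq+(n+1) = (treq+1)+n by omega, pow_add]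
            ring
          rw [hrw]
          exact (summable_geometric_of_lt_one (pow_nonneg hq0 _) (hqk_lt k hk)).mul_left _)
      simp only [hh]
      rw [hts]
      exact Finset.sum_congr rfl htail
    rw [this]
    rw [Finset.sum_congr rfl (fun k _ => by
      rw [sub_sub_cancel] :
      ∀ k ∈ Finset.Icc 1 M, (M.choose k : ℝ) * (-1 : ℝ) ^ (k + 1) *
        (1 + (1 - (1 - (1 - p) ^ k)) ^ (treq + 1) / (1 - (1 - p) ^ k))
        = c k * (1 + ((1-p)^k)^(treq+1) / (1 - (1-p)^k)))]
    rw [Finset.sum_congr rfl (fun k _ => mul_add (c k) 1 _), Finset.sum_add_distrib]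
    simp only [mul_one, hsum_c]
  -- final assembly
  have hnn : 0 ≤ᵐ[μ] fun ω => ((max (V ω - treq) 1 : ℕ) : ℝ) :=
    Filter.Eventually.of_forall fun ω => Nat.cast_nonneg _
  have hWmeas : Measurable fun ω => ((max (V ω - treq) 1 : ℕ) : ℝ) := by
    have : (fun ω => ((max (V ω - treq) 1 : ℕ) : ℝ))
        = (fun k : ℕ => ((max (k - treq) 1 : ℕ) : ℝ)) ∘ V := rfl
    rw [this]
    exact (measurable_from_top (f := fun k : ℕ => ((max (k - treq) 1 : ℕ) : ℝ))).comp hVmeas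
  rw [integral_eq_lintegral_of_nonneg_ae hnn hWmeas.aestronglyMeasurable]
  simp_rw [ENNReal.ofReal_natCast]
  rw [hlin, ← ENNReal.ofReal_tsum_of_nonneg hg0 hsummable_g,
    ENNReal.toReal_ofReal (tsum_nonneg hg0), htsum_g]
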